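/- For β ≥ 2, a ∈ (0,1], b > 0, the Hessian of γ_β(a,b) = b·a·log a + β·b·log b, namely [[β/b, 1+log a],[1+log a, b/a]], satisfies: the block matrix [[H,−B],[B,H]] is positive semidefinite, where H = d²γ_β(a,b) and B = [[0,−1],[1,0]]. -/

import Mathlib

lemma key_ineq (a : ℝ) (ha0 : 0 < a) (ha1 : a ≤ 1) :
    a * ((1 + Real.log a) ^ 2 + 1) ≤ 2 := by
  have hs : 0 ≤ -Real.log a := by
    have := Real.log_nonpos ha0.le ha1; linarith
  have hq := Real.quadratic_le_exp_of_nonneg hs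
  have h2 : Real.exp (-Real.log a) = 1 / a := by
    rw [Real.exp_neg, Real.exp_log ha0]; ring
  rw [h2] at hq
  have h3 : a * (1 + -Real.log a + (-Real.log a) ^ 2 / 2) ≤ 1 := by
    have := mul_le_mul_of_nonneg_left hq ha0.le
    calc a * (1 + -Real.log a + (-Real.log a) ^ 2 / 2) ≤ a * (1 / a) := this
      _ = 1 := by field_simp
  nlinarith [mul_nonneg ha0.le hs]

lemma psd4 (p q c : ℝ) (hp : 0 < p) (hpq : c ^ 2 + 1 ≤ p * q) :
    (!![p, c, 0, 1; c, q, -1, 0; 0, -1, p, c; 1, 0, c, q] :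
      Matrix (Fin 4) (Fin 4) ℝ).PosSemidef := by
  rw [Matrix.posSemidef_iff_dotProduct_mulVec]
  constructor
  · ext i j
    fin_cases i <;> fin_cases j <;> rfl
  · intro x
    have hsum : dotProduct (star x)
        ((!![p, c, 0, 1; c, q, -1, 0; 0, -1, p, c; 1, 0, c, q]).mulVec x) =
        p * (x 0)^2 + 2*c*(x 0)*(x 1) + q*(x 1)^2
        + p * (x 2)^2 + 2*c*(x 2)*(x 3) + q*(x 3)^2
        + 2*((x 0)*(x 3) - (x 1)*(x 2)) := by
      simp [dotProduct, Matrix.mulVec, Fin.sum_univ_four]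
      ring
    rw [hsum]
    nlinarith [sq_nonneg (p * x 0 + c * x 1 + x 3),
      sq_nonneg (p * x 2 + c * x 3 - x 1),
      sq_nonneg (x 1), sq_nonneg (x 3), hp,
      mul_nonneg (mul_nonneg (sub_nonneg.2 hpq) (sq_nonneg (x 1))) hp.le,
      mul_nonneg (mul_nonneg (sub_nonneg.2 hpq) (sq_nonneg (x 3))) hp.le]

theorem gadget_hessian_area_convex
    (β a b : ℝ) (hβ : 2 ≤ β) (ha : a ∈ Set.Ioc (0 : ℝ) 1) (hb : 0 < b)
    (H B : Matrix (Fin 2) (Fin 2) ℝ)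
    (hH : H = !![β / b, 1 + Real.log a; 1 + Real.log a, b / a])
    (hB : B = !![0, -1; 1, 0]) :
    (Matrix.fromBlocks H (-B) B H).PosSemidef := by
  obtain ⟨ha0, ha1⟩ := ha
  set c := 1 + Real.log a with hc
  have hkey : a * (c ^ 2 + 1) ≤ 2 := key_ineq a ha0 ha1
  have hp : 0 < β / b := div_pos (by linarith) hb
  have hpq : c ^ 2 + 1 ≤ (β / b) * (b / a) := by
    have h1 : (β / b) * (b / a) = β / a := by field_simp
    rw [h1, le_div_iff₀ ha0]
    nlinarith
  have hpsd := psd4 (β / b) (b / a) c hp hpq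
  rw [← Matrix.posSemidef_submatrix_equiv (finSumFinEquiv (m := 2) (n := 2)).symm]
  have hMeq : (Matrix.fromBlocks H (-B) B H).submatrix
      (finSumFinEquiv (m := 2) (n := 2)).symm (finSumFinEquiv (m := 2) (n := 2)).symm =
      !![β / b, c, 0, 1; c, b / a, -1, 0; 0, -1, β / b, c; 1, 0, c, b / a] := by
    subst hH hB
    ext i j
    fin_cases i <;> fin_cases j <;>
      simp [Matrix.fromBlocks, finSumFinEquiv, Matrix.submatrix, Fin.addCases] <;> rfl
  rw [hMeq]
  exact hpsd
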